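/- In the multilayer setting with widths n_0, …, n_L and layers h = (h_1, …, h_L), for every i ∈ {1, …, L-1}, |𝒮^{(i+1)}_h| ≤ Σ_{(s_1, …, s_i) ∈ 𝒮^{(i)}_h} Σ_{j=0}^{min(n_0, |s_1|, …, |s_i|)} C(n_{i+1}, j). -/

import Mathlib

set_option maxHeartbeats 1000000


open Matrix

noncomputable def relu {n n' : ℕ} (W : Matrix (Fin n') (Fin n) ℝ) (b : Fin n' → ℝ)
    (x : Fin n → ℝ) : Fin n' → ℝ :=
  fun i => max 0 (W i ⬝ᵥ x + b i)

noncomputable def sig {n n' : ℕ} (W : Matrix (Fin n') (Fin n) ℝ) (b : Fin n' → ℝ)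
    (x : Fin n → ℝ) : Fin n' → Bool :=
  fun i => decide (0 < W i ⬝ᵥ x + b i)

/-- Forward pass through the first `l` layers: `fwd n W b l = h_l ∘ ⋯ ∘ h_1`. -/
noncomputable def fwd (n : ℕ → ℕ) (W : ∀ l : ℕ, Matrix (Fin (n (l + 1))) (Fin (n l)) ℝ)
    (b : ∀ l : ℕ, Fin (n (l + 1)) → ℝ) : (l : ℕ) → (Fin (n 0) → ℝ) → (Fin (n l) → ℝ)
  | 0 => fun x => x
  | l + 1 => fun x => relu (W l) (b l) (fwd n W b l x)

/-- Multi signature of length `m`: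
`msig n W b m x = (S_{h_1}(x), S_{h_2}(h_1(x)), …, S_{h_m}(h_{m-1}∘⋯∘h_1(x)))`. -/
noncomputable def msig (n : ℕ → ℕ) (W : ∀ l : ℕ, Matrix (Fin (n (l + 1))) (Fin (n l)) ℝ)
    (b : ∀ l : ℕ, Fin (n (l + 1)) → ℝ) (m : ℕ) (x : Fin (n 0) → ℝ) :
    ∀ l : Fin m, Fin (n (l.val + 1)) → Bool :=
  fun l => sig (W l.val) (b l.val) (fwd n W b l.val x)

/-- Number of active units of a binary vector `s`, i.e. `|s|`. -/
def cnt {k : ℕ} (s : Fin k → Bool) : ℕ := (Finset.univ.filter fun j => s j = true).card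

/-- `min(n_0, |s_1|, …, |s_i|)` for a length-`i` multi signature `s`. -/
def minAct (n : ℕ → ℕ) (i : ℕ) (s : ∀ l : Fin i, Fin (n (l.val + 1)) → Bool) : ℕ :=
  Finset.univ.fold min (n 0) (fun l : Fin i => cnt (s l))


-- Pascal-sum lemma
lemma pascal_sum (k d : ℕ) :
    ∑ j ∈ Finset.range (d+2), (k+1).choose j
      = ∑ j ∈ Finset.range (d+2), k.choose j + ∑ j ∈ Finset.range (d+1), k.choose j := by
  induction d with
  | zero => simp [Finset.sum_range_succ]; omega
  | succ d ih =>
      rw [Finset.sum_range_succ, ih, Finset.sum_range_succ (n := d+2),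
        Finset.sum_range_succ (n := d+1)]
      have : (k+1).choose (d+2) = k.choose (d+1) + k.choose (d+2) := Nat.choose_succ_succ _ _
      omega

-- Sauer step
lemma sauer_step {k : ℕ} (P : Set (Fin (k+1) → Bool)) :
    P.ncard ≤ ((fun p => fun l : Fin k => p l.castSucc) '' P).ncard +
      {q : Fin k → Bool | Fin.snoc q true ∈ P ∧ Fin.snoc q false ∈ P}.ncard := by

  set r : (Fin (k+1) → Bool) → (Fin k → Bool) := fun p l => p l.castSucc with hr
  have hsnoc : ∀ p : Fin (k+1) → Bool, Fin.snoc (r p) (p (Fin.last k)) = p := by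
    intro p; funext l
    induction l using Fin.lastCases with
    | last => simp [Fin.snoc_last]
    | cast l => simp [Fin.snoc_castSucc, r]
  set P1 := {p ∈ P | p (Fin.last k) = true}
  set P0 := {p ∈ P | p (Fin.last k) = false}
  have hunion : P = P1 ∪ P0 := by
    ext p; simp only [P1, P0, Set.mem_union, Set.mem_setOf_eq, Set.mem_sep_iff]
    cases h : p (Fin.last k) <;> simp [h] <;> tauto
  have hinj : ∀ (c : Bool), Set.InjOn r {p ∈ P | p (Fin.last k) = c} := by
    intro c p hp q hq hpq
    rw [← hsnoc p, ← hsnoc q, hp.2, hq.2, hpq]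
  have h1 : P1.ncard = (r '' P1).ncard := (Set.ncard_image_of_injOn (hinj true)).symm
  have h0 : P0.ncard = (r '' P0).ncard := (Set.ncard_image_of_injOn (hinj false)).symm
  have hsub : r '' P1 ∪ r '' P0 ⊆ r '' P := by
    rw [← Set.image_union]
    exact Set.image_mono (by rw [hunion])
  have hintB : r '' P1 ∩ r '' P0 ⊆ {q : Fin k → Bool | Fin.snoc q true ∈ P ∧ Fin.snoc q false ∈ P} := by
    rintro q ⟨⟨p, hp, rfl⟩, ⟨p', hp', hp'q⟩⟩
    constructor
    · rw [← hp.2, hsnoc p]; exact hp.1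
    · rw [← hp'q, ← hp'.2, hsnoc p']; exact hp'.1
  calc P.ncard ≤ P1.ncard + P0.ncard := by
        rw [hunion]; exact Set.ncard_union_le _ _
    _ = (r '' P1).ncard + (r '' P0).ncard := by rw [h1, h0]
    _ = (r '' P1 ∪ r '' P0).ncard + (r '' P1 ∩ r '' P0).ncard :=
        (Set.ncard_union_add_ncard_inter _ _ (Set.toFinite _) (Set.toFinite _)).symm
    _ ≤ (r '' P).ncard + {q : Fin k → Bool | Fin.snoc q true ∈ P ∧ Fin.snoc q false ∈ P}.ncard := by
        exact Nat.add_le_add (Set.ncard_le_ncard hsub (Set.toFinite _))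
          (Set.ncard_le_ncard hintB (Set.toFinite _))

theorem patternA (k : ℕ) : ∀ (d : ℕ) (A : Matrix (Fin k) (Fin d) ℝ) (c : Fin k → ℝ),
    (Set.range fun x : Fin d → ℝ => fun i : Fin k => decide (0 < A i ⬝ᵥ x + c i)).ncard
      ≤ ∑ j ∈ Finset.range (d+1), k.choose j := by
  induction k with
  | zero =>
      intro d A c
      have h1 : (Set.range fun x : Fin d → ℝ => fun i : Fin 0 => decide (0 < A i ⬝ᵥ x + c i)).ncard ≤ 1 := by
        refine le_trans (Set.ncard_le_ncard (Set.subset_univ _) (Set.toFinite _)) ?_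
        rw [Set.ncard_univ]
        simp [Nat.card_eq_fintype_card]
      refine le_trans h1 ?_
      calc 1 = Nat.choose 0 0 := rfl
        _ ≤ _ := Finset.single_le_sum (f := fun j => Nat.choose 0 j) (fun _ _ => Nat.zero_le _)
            (Finset.mem_range.2 (Nat.succ_pos d))
  | succ k ih =>
      intro d A c
      set F : (Fin d → ℝ) → (Fin (k+1) → Bool) :=
        fun x => fun i => decide (0 < A i ⬝ᵥ x + c i) with hF
      set A₁ : Matrix (Fin k) (Fin d) ℝ := fun i => A i.castSucc with hA₁
      set c₁ : Fin k → ℝ := fun i => c i.castSucc with hc₁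
      set G : (Fin d → ℝ) → (Fin k → Bool) :=
        fun x => fun i => decide (0 < A₁ i ⬝ᵥ x + c₁ i) with hG
      set a : Fin d → ℝ := A (Fin.last k) with ha
      by_cases haz : a = 0
      · -- last functional has zero linear part: last bit is constant
        set cb : Bool := decide (0 < c (Fin.last k)) with hcb
        have hFx : ∀ x, F x = Fin.snoc (G x) cb := by
          intro x; funext l
          induction l using Fin.lastCases with
          | last =>
              rw [Fin.snoc_last]
              simp only [F, hcb, ← ha, haz]
              rw [zero_dotProduct, zero_add]
          | cast l => rw [Fin.snoc_castSucc]
        have himg : Set.range F = (fun q : Fin k → Bool => (Fin.snoc q cb : Fin (k+1) → Bool)) '' Set.range G := by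
          ext p
          constructor
          · rintro ⟨x, rfl⟩; exact ⟨G x, ⟨x, rfl⟩, (hFx x).symm⟩
          · rintro ⟨q, ⟨x, rfl⟩, rfl⟩; exact ⟨x, hFx x⟩
        have hinj : Function.Injective (fun q : Fin k → Bool => (Fin.snoc q cb : Fin (k+1) → Bool)) := by
          intro q q' h
          funext l
          have := congrFun h l.castSucc
          simpa [Fin.snoc_castSucc] using this
        rw [himg, Set.ncard_image_of_injective _ hinj]
        refine le_trans (ih d A₁ c₁) (Finset.sum_le_sum fun j _ => Nat.choose_le_choose j (Nat.le_succ k))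
      · -- last functional nontrivial
        obtain ⟨d', rfl⟩ : ∃ d', d = d' + 1 := by
          cases d with
          | zero => exact absurd (funext fun j => j.elim0) haz
          | succ d' => exact ⟨d', rfl⟩
        obtain ⟨t0, ht0⟩ : ∃ t0, a t0 ≠ 0 := by
          by_contra h
          push_neg at h
          exact haz (funext h)
        set σ : Fin d' → Fin (d'+1) := t0.succAbove with hσ
        set cl : ℝ := c (Fin.last k) with hcl
        set ψ : (Fin d' → ℝ) → (Fin (d'+1) → ℝ) :=
          fun u => t0.insertNth ((-cl - ∑ j, a (σ j) * u j) / a t0) u with hψ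
        set A' : Matrix (Fin k) (Fin d') ℝ :=
          fun i j => A i.castSucc (σ j) - A i.castSucc t0 * a (σ j) / a t0 with hA'
        set c' : Fin k → ℝ := fun i => c i.castSucc - A i.castSucc t0 * cl / a t0 with hc'
        have hψ1 : ∀ u, ψ u t0 = (-cl - ∑ j, a (σ j) * u j) / a t0 := by
          intro u
          simp only [hψ, hσ]
          exact Fin.insertNth_apply_same (α := fun _ => ℝ) t0 _ u
        have hψ2 : ∀ u j, ψ u (σ j) = u j := by
          intro u j
          simp only [hψ, hσ]
          exact Fin.insertNth_apply_succAbove (α := fun _ => ℝ) t0 _ u j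
        have key : ∀ (i : Fin k) (u : Fin d' → ℝ),
            A i.castSucc ⬝ᵥ ψ u + c i.castSucc = A' i ⬝ᵥ u + c' i := by
          intro i u
          have hdot : A i.castSucc ⬝ᵥ ψ u
              = A i.castSucc t0 * ((-cl - ∑ j, a (σ j) * u j) / a t0)
                + ∑ j, A i.castSucc (σ j) * u j := by
            rw [dotProduct, Fin.sum_univ_succAbove (fun j => A i.castSucc j * ψ u j) t0, hψ1]
            congr 1
            exact Finset.sum_congr rfl fun j _ => by rw [hψ2]
          have hdot' : A' i ⬝ᵥ u
              = ∑ j, A i.castSucc (σ j) * u j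
                - (A i.castSucc t0 / a t0) * ∑ j, a (σ j) * u j := by
            rw [dotProduct, Finset.mul_sum, ← Finset.sum_sub_distrib]
            exact Finset.sum_congr rfl fun j _ => by rw [hA']; ring
          rw [hdot, hdot', hc']
          generalize (∑ j, a (σ j) * u j) = S
          generalize (∑ j, A i.castSucc (σ j) * u j) = T
          field_simp
          ring
        -- apply sauer step
        have hstep := sauer_step (Set.range F)
        have hrP : ((fun p => fun l : Fin k => p l.castSucc) '' Set.range F)
            ⊆ Set.range G := by
          rintro q ⟨p, ⟨x, rfl⟩, rfl⟩
          exact ⟨x, rfl⟩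
        have hBsub : {q : Fin k → Bool | Fin.snoc q true ∈ Set.range F ∧
              Fin.snoc q false ∈ Set.range F}
            ⊆ Set.range (fun u : Fin d' → ℝ => fun i : Fin k =>
            decide (0 < A' i ⬝ᵥ u + c' i)) := by
          rintro q ⟨⟨x, hx⟩, ⟨y, hy⟩⟩
          have hgx : 0 < a ⬝ᵥ x + cl := by
            have h := congrFun hx (Fin.last k)
            rw [Fin.snoc_last] at h
            simpa [F, ← ha, ← hcl] using h.symm
          have hgy : a ⬝ᵥ y + cl ≤ 0 := by
            have h := congrFun hy (Fin.last k)
            rw [Fin.snoc_last] at h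
            have h2 : ¬ (0 < a ⬝ᵥ y + cl) := by simpa [F, ← ha, ← hcl] using h.symm
            linarith
          have hbitx : ∀ i : Fin k, q i = decide (0 < A i.castSucc ⬝ᵥ x + c i.castSucc) := by
            intro i
            have h := congrFun hx i.castSucc
            rw [Fin.snoc_castSucc] at h
            exact h.symm
          have hbity : ∀ i : Fin k, q i = decide (0 < A i.castSucc ⬝ᵥ y + c i.castSucc) := by
            intro i
            have h := congrFun hy i.castSucc
            rw [Fin.snoc_castSucc] at h
            exact h.symm
          set gx := a ⬝ᵥ x + cl with hgxdef
          set gy := a ⬝ᵥ y + cl with hgydef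
          set t : ℝ := gx / (gx - gy) with htdef
          have hden : 0 < gx - gy := by linarith
          have ht0' : 0 < t := div_pos hgx hden
          have ht1 : t ≤ 1 := by
            rw [htdef, div_le_one hden]; linarith
          set z : Fin (d'+1) → ℝ := fun j => (1-t) * x j + t * y j with hz
          have hcomb : ∀ (w : Fin (d'+1) → ℝ) (e : ℝ),
              w ⬝ᵥ z + e = (1-t) * (w ⬝ᵥ x + e) + t * (w ⬝ᵥ y + e) := by
            intro w e
            have h : w ⬝ᵥ z = (1-t) * (w ⬝ᵥ x) + t * (w ⬝ᵥ y) := by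
              simp only [dotProduct, hz, Finset.mul_sum, ← Finset.sum_add_distrib]
              exact Finset.sum_congr rfl fun j _ => by ring
            rw [h]; ring
          have hgz : a ⬝ᵥ z + cl = 0 := by
            rw [hcomb a cl, ← hgxdef, ← hgydef]
            have h : t * (gx - gy) = gx := div_mul_cancel₀ gx (ne_of_gt hden)
            nlinarith [h]
          have hbitz : ∀ i : Fin k, q i = decide (0 < A i.castSucc ⬝ᵥ z + c i.castSucc) := by
            intro i
            rw [hcomb (A i.castSucc) (c i.castSucc)]
            cases hq : q i with
            | true =>
                have h1 : 0 < A i.castSucc ⬝ᵥ x + c i.castSucc :=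
                  of_decide_eq_true ((hbitx i).symm.trans hq)
                have h2 : 0 < A i.castSucc ⬝ᵥ y + c i.castSucc :=
                  of_decide_eq_true ((hbity i).symm.trans hq)
                symm
                rw [decide_eq_true_eq]
                nlinarith [mul_nonneg (by linarith : (0:ℝ) ≤ 1 - t) (le_of_lt h1)]
            | false =>
                have h1 : ¬ (0 < A i.castSucc ⬝ᵥ x + c i.castSucc) := by
                  have h := (hbitx i).symm.trans hq
                  simpa using h
                have h2 : ¬ (0 < A i.castSucc ⬝ᵥ y + c i.castSucc) := by
                  have h := (hbity i).symm.trans hq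
                  simpa using h
                symm
                rw [decide_eq_false_iff_not]
                push_neg at h1 h2 ⊢
                nlinarith [mul_nonpos_of_nonneg_of_nonpos (by linarith : (0:ℝ) ≤ 1 - t) h1,
                  mul_nonpos_of_nonneg_of_nonpos (le_of_lt ht0') h2]
          refine ⟨fun j => z (σ j), ?_⟩
          have hψz : ψ (fun j => z (σ j)) = z := by
            funext j
            refine Fin.succAboveCases t0 ?_ ?_ j
            · rw [hψ1]
              have hsum : a ⬝ᵥ z = a t0 * z t0 + ∑ j, a (σ j) * z (σ j) :=
                Fin.sum_univ_succAbove (fun j => a j * z j) t0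
            
              have h5 : a t0 * z t0 = -cl - ∑ j, a (σ j) * z (σ j) := by
                rw [hsum] at hgz
                linarith
              rw [div_eq_iff ht0]
              linear_combination -h5
            · intro j'
              rw [hψ2]
          funext i
          show decide (0 < A' i ⬝ᵥ (fun j => z (σ j)) + c' i) = q i
          rw [← key i, hψz, ← hbitz i]
        calc (Set.range F).ncard
            ≤ ((fun p => fun l : Fin k => p l.castSucc) '' Set.range F).ncard +
              {q : Fin k → Bool | Fin.snoc q true ∈ Set.range F ∧
                Fin.snoc q false ∈ Set.range F}.ncard := hstep
          _ ≤ (∑ j ∈ Finset.range (d'+2), k.choose j) +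
              (∑ j ∈ Finset.range (d'+1), k.choose j) := by
              refine Nat.add_le_add ?_ ?_
              · exact le_trans (Set.ncard_le_ncard hrP (Set.toFinite _)) (ih (d'+1) A₁ c₁)
              · exact le_trans (Set.ncard_le_ncard hBsub (Set.toFinite _)) (ih d' A' c')
          _ = ∑ j ∈ Finset.range (d'+2), (k+1).choose j := (pascal_sum k d').symm

lemma relu_eq_of_sig {m m' : ℕ} (W : Matrix (Fin m') (Fin m) ℝ) (b : Fin m' → ℝ)
    (y : Fin m → ℝ) (p : Fin m' → Bool) (h : sig W b y = p) :
    relu W b y = (Matrix.diagonal (fun k => if p k then (1:ℝ) else 0) * W).mulVec y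
      + fun k => if p k then b k else 0 := by

  funext k
  have hk : (decide (0 < W k ⬝ᵥ y + b k)) = p k := congrFun h k
  have hDW : ((Matrix.diagonal (fun k => if p k then (1:ℝ) else 0) * W).mulVec y) k
      = (if p k then (1:ℝ) else 0) * (W k ⬝ᵥ y) := by
    simp only [Matrix.mulVec, dotProduct, Matrix.diagonal_mul, Finset.mul_sum, mul_assoc]
  show max 0 (W k ⬝ᵥ y + b k) = _
  rw [Pi.add_apply, hDW]
  cases hp : p k with
  | true =>
      rw [hp] at hk
      have := of_decide_eq_true hk
      rw [if_pos rfl, one_mul, max_eq_right (le_of_lt this)]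
      simp
  | false =>
      rw [hp] at hk
      have h2 : ¬ (0 < W k ⬝ᵥ y + b k) := of_decide_eq_false hk
      push_neg at h2
      rw [if_neg (by simp), zero_mul, zero_add, max_eq_left h2]
      simp

lemma fold_min_cases {β : Type*} [DecidableEq β] (b : ℕ) (f : β → ℕ) (s : Finset β) :
    s.fold min b f = b ∨ ∃ a ∈ s, s.fold min b f = f a := by
  induction s using Finset.induction with
  | empty => left; rfl
  | @insert a s ha ih =>
      rw [Finset.fold_insert ha]
      rcases min_choice (f a) (s.fold min b f) with h | h
      · right; exact ⟨a, Finset.mem_insert_self a s, h⟩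
      · rw [h]
        rcases ih with h' | ⟨a', ha', h'⟩
        · left; exact h'
        · right; exact ⟨a', Finset.mem_insert_of_mem ha', h'⟩

lemma affineFiber (n : ℕ → ℕ) (W : ∀ l : ℕ, Matrix (Fin (n (l + 1))) (Fin (n l)) ℝ)
    (b : ∀ l : ℕ, Fin (n (l + 1)) → ℝ) (i : ℕ)
    (s : ∀ l : Fin i, Fin (n (l.val + 1)) → Bool) :
    ∀ (j l : ℕ), l + j = i → ∃ (A : Matrix (Fin (n i)) (Fin (n l)) ℝ) (v : Fin (n i) → ℝ),
      ∀ x, msig n W b i x = s → fwd n W b i x = A.mulVec (fwd n W b l x) + v := by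
  intro j
  induction j with
  | zero =>
      intro l hl
      obtain rfl : l = i := by omega
      exact ⟨1, 0, fun x _ => by rw [Matrix.one_mulVec]; funext k; simp⟩
  | succ j ih =>
      intro l hl
      obtain ⟨A, v, hAv⟩ := ih (l+1) (by omega)
      have hli : l < i := by omega
      set p : Fin (n (l+1)) → Bool := s ⟨l, hli⟩ with hp
      set D : Matrix (Fin (n (l+1))) (Fin (n (l+1))) ℝ :=
        Matrix.diagonal (fun k => if p k then (1:ℝ) else 0) with hD
      refine ⟨A * (D * W l), v + A.mulVec (fun k => if p k then b l k else 0), ?_⟩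
      intro x hx
      have hsig : sig (W l) (b l) (fwd n W b l x) = p := by
        rw [hp, ← hx]; rfl
      have hstep : fwd n W b (l+1) x
          = (D * W l).mulVec (fwd n W b l x) + fun k => if p k then b l k else 0 := by
        show relu (W l) (b l) (fwd n W b l x) = _
        exact relu_eq_of_sig (W l) (b l) (fwd n W b l x) p hsig
      rw [hAv x hx, hstep, Matrix.mulVec_add, Matrix.mulVec_mulVec]
      abel

theorem stmt9' (n : ℕ → ℕ)
    (W : ∀ l : ℕ, Matrix (Fin (n (l + 1))) (Fin (n l)) ℝ)
    (b : ∀ l : ℕ, Fin (n (l + 1)) → ℝ)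
    (i : ℕ) :
    (Set.range (msig n W b (i + 1))).ncard ≤
      ∑ s ∈ (Set.toFinite (Set.range (msig n W b i))).toFinset,
        ∑ j ∈ Finset.range (minAct n i s + 1), (n (i + 1)).choose j := by
  classical
  set Si := (Set.toFinite (Set.range (msig n W b i))).toFinset with hSi
  set π : (∀ l : Fin (i+1), Fin (n (l.val + 1)) → Bool) →
      (∀ l : Fin i, Fin (n (l.val + 1)) → Bool) :=
    fun p l => p ⟨l.val, Nat.lt_succ_of_lt l.isLt⟩ with hπ
  have hπm : ∀ x, π (msig n W b (i+1) x) = msig n W b i x := fun x => rfl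
  -- the per-prefix extension sets
  set E : (∀ l : Fin i, Fin (n (l.val + 1)) → Bool) → Set (Fin (n (i+1)) → Bool) :=
    fun s => {t | ∃ x, msig n W b i x = s ∧ sig (W i) (b i) (fwd n W b i x) = t} with hE
  -- Step 1: fiberwise counting
  have step1 : (Set.range (msig n W b (i + 1))).ncard ≤ ∑ s ∈ Si, (E s).ncard := by
    set T := (Set.toFinite (Set.range (msig n W b (i+1)))).toFinset with hT
    rw [Set.ncard_eq_toFinset_card _ (Set.toFinite _)]
    have hmem : ∀ p ∈ T, π p ∈ Si := by
      intro p hp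
      rw [hT, Set.Finite.mem_toFinset] at hp
      obtain ⟨x, rfl⟩ := hp
      rw [hSi, Set.Finite.mem_toFinset, hπm]
      exact ⟨x, rfl⟩
    rw [Finset.card_eq_sum_card_fiberwise hmem]
    refine Finset.sum_le_sum fun s hs => ?_
    rw [Set.ncard_eq_toFinset_card _ (Set.toFinite _)]
    refine Finset.card_le_card_of_injOn (fun p => p (Fin.last i)) ?_ ?_
    · intro p hp
      rw [Finset.mem_coe, Finset.mem_filter] at hp
      obtain ⟨hp1, hp2⟩ := hp
      rw [hT, Set.Finite.mem_toFinset] at hp1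
      obtain ⟨x, rfl⟩ := hp1
      rw [Finset.mem_coe, Set.Finite.mem_toFinset]
      exact ⟨x, by rw [← hp2, hπm], rfl⟩
    · intro p hp q hq hpq
      simp only [Finset.coe_filter, Set.mem_setOf_eq] at hp hq
      funext l
      induction l using Fin.lastCases with
      | last => exact hpq
      | cast l =>
          have h1 := congrFun (hp.2.trans hq.2.symm) l
          exact h1
  refine le_trans step1 (Finset.sum_le_sum fun s _ => ?_)
  -- Step 2: bound each E s
  -- support lemma will be used inside
  have hEbound : ∀ (dm : ℕ) (M : Matrix (Fin (n (i+1))) (Fin dm) ℝ) (c : Fin (n (i+1)) → ℝ),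
      E s ⊆ Set.range (fun u : Fin dm → ℝ => fun k => decide (0 < M k ⬝ᵥ u + c k)) →
      (E s).ncard ≤ ∑ j ∈ Finset.range (dm + 1), (n (i+1)).choose j := by
    intro dm M c hsub
    exact le_trans (Set.ncard_le_ncard hsub (Set.toFinite _)) (patternA _ dm M c)
  rcases fold_min_cases (n 0) (fun l : Fin i => cnt (s l)) Finset.univ with hmin | ⟨l, _, hmin⟩
  · -- minAct = n 0
    have hd : minAct n i s = n 0 := hmin
    obtain ⟨A, v, hAv⟩ := affineFiber n W b i s i 0 (by omega)
    rw [hd]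
    refine hEbound (n 0) (W i * A) (fun k => W i k ⬝ᵥ v + b i k) ?_
    rintro t ⟨x, hx, rfl⟩
    refine ⟨x, ?_⟩
    funext k
    have h1 : fwd n W b i x = A.mulVec x + v := hAv x hx
    show decide (0 < (W i * A) k ⬝ᵥ x + (W i k ⬝ᵥ v + b i k))
        = decide (0 < W i k ⬝ᵥ fwd n W b i x + b i k)
    rw [h1]
    congr 1
    rw [dotProduct_add]
    have h2 : W i k ⬝ᵥ A.mulVec x = (W i * A) k ⬝ᵥ x := by
      have := congrFun (Matrix.mulVec_mulVec x (W i) A) k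
      exact this
    rw [h2]
    ring_nf
  · -- minAct = cnt (s l)
    have hd : minAct n i s = cnt (s l) := hmin
    have hl1 : l.val + 1 ≤ i := l.isLt
    obtain ⟨A, v, hAv⟩ := affineFiber n W b i s (i - (l.val+1)) (l.val+1) (by omega)
    set T' : Finset (Fin (n (l.val + 1))) := Finset.univ.filter (fun j => s l j = true) with hT'
    have hcard : T'.card = cnt (s l) := rfl
    set e := T'.orderIsoOfFin hcard with he
    set Em : Matrix (Fin (n (l.val+1))) (Fin (cnt (s l))) ℝ :=
      fun j m => if j = (e m : Fin (n (l.val+1))) then 1 else 0 with hEm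
    rw [hd]
    refine hEbound (cnt (s l)) (W i * (A * Em)) (fun k => W i k ⬝ᵥ v + b i k) ?_
    rintro t ⟨x, hx, rfl⟩
    set z := fwd n W b (l.val+1) x with hz
    -- z is supported on T'
    have hsupp : ∀ j, j ∉ T' → z j = 0 := by
      intro j hj
      rw [hT', Finset.mem_filter] at hj
      have hfalse : s l j = false := by
        rcases Bool.eq_false_or_eq_true (s l j) with h | h
        · exact absurd ⟨Finset.mem_univ j, h⟩ hj
        · exact h
      have hsig : sig (W l.val) (b l.val) (fwd n W b l.val x) = s l := by
        rw [← hx]; rfl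
      have hsigj : sig (W l.val) (b l.val) (fwd n W b l.val x) j = false := by
        rw [hsig, hfalse]
      have hle : W l.val j ⬝ᵥ fwd n W b l.val x + b l.val j ≤ 0 := by
        have h2 := of_decide_eq_false (p := 0 < W l.val j ⬝ᵥ fwd n W b l.val x + b l.val j) hsigj
        linarith [not_lt.mp h2]
      show relu (W l.val) (b l.val) (fwd n W b l.val x) j = 0
      exact max_eq_left hle
    set u : Fin (cnt (s l)) → ℝ := fun m => z (e m) with hu
    have hzE : z = Em.mulVec u := by
      funext j
      have hsum : Em.mulVec u j = ∑ m, (if j = ((e m : T') : Fin (n (l.val+1))) then (1:ℝ) else 0) * u m := rfl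
      rw [hsum]
      by_cases hj : j ∈ T'
      · have hjm : ((e (e.symm ⟨j, hj⟩) : T') : Fin (n (l.val+1))) = j := by
          rw [OrderIso.apply_symm_apply]
        symm
        rw [Finset.sum_eq_single (e.symm ⟨j, hj⟩)]
        · rw [if_pos hjm.symm, one_mul, hu]
          show z _ = z j
          rw [hjm]
        · intro m _ hm
          have hne : j ≠ ((e m : T') : Fin (n (l.val+1))) := by
            intro hh
            apply hm
            have h3 : (⟨j, hj⟩ : T') = e m := Subtype.ext hh
            rw [← (OrderIso.symm_apply_apply e m), ← h3]
          rw [if_neg hne, zero_mul]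
        · intro h
          exact absurd (Finset.mem_univ _) h
      · have h0 : ∀ m ∈ Finset.univ, (if j = ((e m : T') : Fin (n (l.val+1))) then (1:ℝ) else 0) * u m = 0 := by
          intro m _
          have hne : j ≠ ((e m : T') : Fin (n (l.val+1))) := fun hh => hj (hh ▸ (e m).2)
          rw [if_neg hne, zero_mul]
        rw [Finset.sum_eq_zero h0]
        exact hsupp j hj
    refine ⟨u, ?_⟩
    funext k
    have h1 : fwd n W b i x = A.mulVec z + v := hAv x hx
    show decide (0 < (W i * (A * Em)) k ⬝ᵥ u + (W i k ⬝ᵥ v + b i k))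
        = decide (0 < W i k ⬝ᵥ fwd n W b i x + b i k)
    rw [h1, hzE]
    congr 1
    rw [dotProduct_add]
    have h2 : W i k ⬝ᵥ A.mulVec (Em.mulVec u) = (W i * (A * Em)) k ⬝ᵥ u := by
      rw [Matrix.mulVec_mulVec]
      exact congrFun (Matrix.mulVec_mulVec u (W i) (A * Em)) k
    rw [h2]
    ring_nf

/-- In the multilayer setting with widths `n 0, …, n L` and layers `h = (h_1, …, h_L)`,
for every `i ∈ {1, …, L-1}`,
`|𝒮^{(i+1)}_h| ≤ ∑_{(s_1, …, s_i) ∈ 𝒮^{(i)}_h} ∑_{j=0}^{min(n_0,|s_1|,…,|s_i|)} C(n_{i+1}, j)`. -/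
theorem stmt9 (L : ℕ) (hL : 0 < L) (n : ℕ → ℕ) (hn : ∀ l, 0 < n l)
    (W : ∀ l : ℕ, Matrix (Fin (n (l + 1))) (Fin (n l)) ℝ)
    (b : ∀ l : ℕ, Fin (n (l + 1)) → ℝ)
    (i : ℕ) (hi1 : 1 ≤ i) (hi2 : i < L) :
    (Set.range (msig n W b (i + 1))).ncard ≤
      ∑ s ∈ (Set.toFinite (Set.range (msig n W b i))).toFinset,
        ∑ j ∈ Finset.range (minAct n i s + 1), (n (i + 1)).choose j := by
  exact stmt9' n W b i
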